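/- Let G be a simple connected graph with distinguished vertices m₁, m₂ (non-adjacent). If for every pair of vertices u, v of G, either G − {u, v} is connected or every connected component of G − {u, v} contains m₁ or m₂, then G + m₁m₂ is 3-vertex-connected (assuming G has at least 5 vertices). -/
import Mathlib


/-- `G` with the extra edge `a b` added. -/
def addEdge {V : Type*} (G : SimpleGraph V) (a b : V) : SimpleGraph V :=
  G ⊔ SimpleGraph.fromEdgeSet {s(a, b)}

/-- `G` is `k`-vertex-connected: more than `k` vertices and deleting any fewer
than `k` vertices leaves the graph connected. -/
def KConn {V : Type*} [Fintype V] [DecidableEq V] (G : SimpleGraph V) (k : ℕ) : Prop :=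
  k < Fintype.card V ∧
    ∀ S : Finset V, S.card < k → (G.induce ((↑S : Set V)ᶜ)).Connected

lemma key {V : Type*} (G : SimpleGraph V) (m₁ m₂ : V) (hne : m₁ ≠ m₂)
    (T : Set V) (hT : T.Nonempty)
    (h1 : (G.induce T).Connected ∨
      ∀ x : T, ∃ m, (m = m₁ ∨ m = m₂) ∧ ∃ hm : m ∈ T,
        (G.induce T).Reachable x ⟨m, hm⟩) :
    ((addEdge G m₁ m₂).induce T).Connected := by
  have hle : G.induce T ≤ (addEdge G m₁ m₂).induce T := by
    intro a b hab
    exact Or.inl hab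
  rcases h1 with hc | hr
  · exact hc.mono hle
  · haveI := hT.to_subtype
    refine ⟨fun x y => ?_⟩
    obtain ⟨mx, hmx, hmemx, hrx⟩ := hr x
    obtain ⟨my, hmy, hmemy, hry⟩ := hr y
    have hrx' := hrx.mono hle
    have hry' := hry.mono hle
    have hmid : ((addEdge G m₁ m₂).induce T).Reachable ⟨mx, hmemx⟩ ⟨my, hmemy⟩ := by
      rcases eq_or_ne mx my with rfl | hmm
      · exact SimpleGraph.Reachable.refl _
      · have hadj : (addEdge G m₁ m₂).Adj mx my := by
          rcases hmx with rfl | rfl <;> rcases hmy with rfl | rfl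
          · exact absurd rfl hmm
          · exact Or.inr (by simp [SimpleGraph.fromEdgeSet_adj, hne])
          · exact Or.inr (by simp [SimpleGraph.fromEdgeSet_adj, hne, hne.symm, Sym2.eq_swap])
          · exact absurd rfl hmm
        have : ((addEdge G m₁ m₂).induce T).Adj ⟨mx, hmemx⟩ ⟨my, hmemy⟩ := hadj
        exact this.reachable
    exact (hrx'.trans hmid).trans hry'.symm

theorem stmt_1 {V : Type*} [Fintype V] [DecidableEq V]
    (G : SimpleGraph V) (m₁ m₂ : V) (hne : m₁ ≠ m₂) (hnadj : ¬ G.Adj m₁ m₂)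
    (hconn : G.Connected) (hcard : 5 ≤ Fintype.card V)
    (h : ∀ u v : V,
      (G.induce (({u, v} : Set V)ᶜ)).Connected ∨
        ∀ x : (({u, v} : Set V)ᶜ : Set V),
          ∃ m, (m = m₁ ∨ m = m₂) ∧ ∃ hm : m ∈ (({u, v} : Set V)ᶜ),
            (G.induce (({u, v} : Set V)ᶜ)).Reachable x ⟨m, hm⟩) :
    KConn (addEdge G m₁ m₂) 3 := by
  constructor
  · omega
  intro S hS
  have hne' : ((↑S : Set V)ᶜ).Nonempty := by
    by_contra hno
    rw [Set.not_nonempty_iff_eq_empty, Set.compl_empty_iff] at hno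
    have : (Finset.univ : Finset V) ⊆ S := fun x _ => by
      have : x ∈ (↑S : Set V) := hno ▸ Set.mem_univ x
      exact this
    have h5 := Finset.card_le_card this
    rw [Finset.card_univ] at h5
    omega
  have hcases : S.card = 0 ∨ S.card = 1 ∨ S.card = 2 := by omega
  rcases hcases with h0 | h1 | h2
  · obtain rfl := Finset.card_eq_zero.mp h0
    have e : ((↑(∅ : Finset V) : Set V))ᶜ = Set.univ := by simp
    rw [e]
    have hc : (addEdge G m₁ m₂).Connected := hconn.mono le_sup_left
    exact (SimpleGraph.induceUnivIso (addEdge G m₁ m₂)).connected_iff.mpr hc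
  · obtain ⟨a, rfl⟩ := Finset.card_eq_one.mp h1
    have h' := h a a
    rw [Set.pair_eq_singleton] at h'
    have : (↑({a} : Finset V) : Set V) = ({a} : Set V) := by simp
    rw [this]
    exact key G m₁ m₂ hne _ (by rw [this] at hne'; exact hne') h'
  · obtain ⟨a, b, hab, rfl⟩ := Finset.card_eq_two.mp h2
    have h' := h a b
    have : (↑({a, b} : Finset V) : Set V) = ({a, b} : Set V) := by simp
    rw [this]
    exact key G m₁ m₂ hne _ (by rw [this] at hne'; exact hne') h'
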